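/- There do not exist d+2 nondegenerate d-simplices in ℝ^d, with pairwise disjoint interiors, such that every pair of them shares a common (d−1)-dimensional facet (i.e., the dual graph of a pure d-dimensional simplicial complex in ℝ^d does not contain K_{d+2} as a subgraph). -/

import Mathlib

open scoped Classical

/-- A nondegenerate `d`-simplex in `ℝ^d`, given by its vertex set. -/
def IsSimplex (d : ℕ) (V : Finset (EuclideanSpace ℝ (Fin d))) : Prop :=
  V.card = d + 1 ∧
    AffineIndependent ℝ (fun x : V => (x : EuclideanSpace ℝ (Fin d)))

/-- Two `d`-simplices share a `(d-1)`-facet: they have exactly `d` common vertices and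
their intersection is the convex hull of those common vertices. -/
def SharesFacet (d : ℕ) (V W : Finset (EuclideanSpace ℝ (Fin d))) : Prop :=
  (V ∩ W).card = d ∧
    convexHull ℝ (V : Set (EuclideanSpace ℝ (Fin d))) ∩
        convexHull ℝ (W : Set (EuclideanSpace ℝ (Fin d))) =
      convexHull ℝ ((V ∩ W : Finset (EuclideanSpace ℝ (Fin d))) : Set (EuclideanSpace ℝ (Fin d)))

namespace NoKd2Aux
open Finset
variable {d : ℕ}
noncomputable def basisOf {s : Finset (EuclideanSpace ℝ (Fin d))} (h : IsSimplex d s) :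
    AffineBasis s ℝ (EuclideanSpace ℝ (Fin d)) :=
  ⟨fun x => (x : EuclideanSpace ℝ (Fin d)), h.2, by
    rw [h.2.affineSpan_eq_top_iff_card_eq_finrank_add_one]
    simp [h.1, finrank_euclideanSpace_fin]⟩
@[simp] lemma basisOf_apply {s : Finset (EuclideanSpace ℝ (Fin d))} (h : IsSimplex d s)
    (i : s) : basisOf h i = (i : EuclideanSpace ℝ (Fin d)) := rfl
lemma coord_mem {s : Finset (EuclideanSpace ℝ (Fin d))} (h : IsSimplex d s)
    (i : s) {y : EuclideanSpace ℝ (Fin d)} (hy : y ∈ s) :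
    (basisOf h).coord i y = if (i : EuclideanSpace ℝ (Fin d)) = y then 1 else 0 := by
  have hrw : y = basisOf h ⟨y, hy⟩ := rfl
  rw [hrw, AffineBasis.coord_apply]
  simp [Subtype.ext_iff]
  congr
lemma affineMap_eq_on_convexHull {f : EuclideanSpace ℝ (Fin d) →ᵃ[ℝ] ℝ}
    {t : Set (EuclideanSpace ℝ (Fin d))} {c : ℝ}
    (h : ∀ x ∈ t, f x = c) {x} (hx : x ∈ convexHull ℝ t) : f x = c := by
  have hsub : convexHull ℝ t ⊆ f ⁻¹' {c} :=
    convexHull_min (fun y hy => h y hy) ((convex_singleton c).affine_preimage f)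
  exact hsub hx
lemma mem_hull_of_coords {s : Finset (EuclideanSpace ℝ (Fin d))} (h : IsSimplex d s)
    {x : EuclideanSpace ℝ (Fin d)} (hx : ∀ i, 0 ≤ (basisOf h).coord i x) :
    x ∈ convexHull ℝ (s : Set (EuclideanSpace ℝ (Fin d))) := by
  have hrep := (basisOf h).affineCombination_coord_eq_self x
  have hmem := affineCombination_mem_convexHull (s := Finset.univ) (v := ⇑(basisOf h))
    (w := fun i => (basisOf h).coord i x) (fun i _ => hx i)
    ((basisOf h).sum_coord_apply_eq_one x)
  rw [hrep] at hmem
  have hr : Set.range ⇑(basisOf h) = (s : Set (EuclideanSpace ℝ (Fin d))) := Subtype.range_coe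
  rwa [hr] at hmem
lemma eval_eq_sum {s : Finset (EuclideanSpace ℝ (Fin d))} (h : IsSimplex d s)
    (f : EuclideanSpace ℝ (Fin d) →ᵃ[ℝ] ℝ) (x : EuclideanSpace ℝ (Fin d)) :
    f x = ∑ i : s, (basisOf h).coord i x * f (i : EuclideanSpace ℝ (Fin d)) := by
  conv_lhs => rw [← (basisOf h).affineCombination_coord_eq_self x]
  rw [map_affineCombination _ _ _ ((basisOf h).sum_coord_apply_eq_one x) f,
    affineCombination_eq_linear_combination _ _ _ ((basisOf h).sum_coord_apply_eq_one x)]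
  simp [smul_eq_mul]
lemma self_eq_sum {s : Finset (EuclideanSpace ℝ (Fin d))} (h : IsSimplex d s)
    (x : EuclideanSpace ℝ (Fin d)) :
    x = ∑ i : s, (basisOf h).coord i x • (i : EuclideanSpace ℝ (Fin d)) := by
  conv_lhs => rw [← (basisOf h).affineCombination_coord_eq_self x]
  rw [affineCombination_eq_linear_combination _ _ _ ((basisOf h).sum_coord_apply_eq_one x)]
  rfl

/-- If two simplices over common facet `F` with apexes `a`, `b` intersect exactly in
`convexHull F`, then `a` is on the strictly negative side of any affine functional that
vanishes on `F` and equals `1` at `b`. -/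
lemma side_neg (hd : 1 ≤ d) {F : Finset (EuclideanSpace ℝ (Fin d))}
    {a b : EuclideanSpace ℝ (Fin d)}
    (haF : a ∉ F) (hbF : b ∉ F) (hab : a ≠ b) (hFcard : F.card = d)
    (hA : IsSimplex d (insert a F)) (hB : IsSimplex d (insert b F))
    (hcap : convexHull ℝ ((insert a F : Finset _) : Set (EuclideanSpace ℝ (Fin d))) ∩
        convexHull ℝ ((insert b F : Finset _) : Set (EuclideanSpace ℝ (Fin d))) =
      convexHull ℝ (F : Set (EuclideanSpace ℝ (Fin d))))
    (ψ : EuclideanSpace ℝ (Fin d) →ᵃ[ℝ] ℝ)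
    (hψF : ∀ x ∈ F, ψ x = 0) (hψb : ψ b = 1) :
    ψ a < 0 := by
  have hbG : b ∈ insert b F := mem_insert_self _ _
  set β := basisOf hB with hβ
  set ib : (insert b F : Finset _) := (⟨b, hbG⟩ : (insert b F : Finset _))
  set κ : EuclideanSpace ℝ (Fin d) →ᵃ[ℝ] ℝ := β.coord ib with hκdef
  -- ψ agrees with the barycentric coordinate of `b`
  have hψeq : ∀ z, ψ z = κ z := by
    intro z
    rw [eval_eq_sum hB ψ z, Finset.sum_eq_single ib]
    · simp [hψb, hκdef]
      rw [show ψ (ib : EuclideanSpace ℝ (Fin d)) = 1 from hψb, mul_one]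
    · intro i _ hne
      have hi : (i : EuclideanSpace ℝ (Fin d)) ∈ insert b F := i.2
      have hiF : (i : EuclideanSpace ℝ (Fin d)) ∈ F := by
        rcases mem_insert.1 hi with h' | h'
        · exact absurd (Subtype.ext h') hne
        · exact h'
      rw [hψF _ hiF, mul_zero]
    · intro h; exact absurd (mem_univ _) h
  rw [hψeq]
  -- κ a ≠ 0
  have hκb : ∀ x ∈ F, κ x = 0 := by
    intro x hx
    rw [hκdef, coord_mem hB ib (mem_insert_of_mem hx)]
    simp only [ib]
    rw [if_neg]; intro h; exact hbF (h ▸ hx)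
  have haG : a ∉ insert b F := by
    simp [hab, haF]
  have hne : κ a ≠ 0 := by
    intro h0
    -- then a is an affine combination of F, contradicting independence of insert a F
    set g : EuclideanSpace ℝ (Fin d) → ℝ := fun x =>
      if hx : x ∈ insert b F then β.coord ⟨x, hx⟩ a else 0 with hg
    have hgsum : ∑ x ∈ insert b F, g x = 1 := by
      have h1 : ∑ i : (insert b F : Finset _), β.coord i a = 1 :=
        β.sum_coord_apply_eq_one a
      have h2 : ∑ i : (insert b F : Finset _), β.coord i a = ∑ x ∈ insert b F, g x := by
        rw [← Finset.sum_coe_sort (insert b F) g]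
        refine Finset.sum_congr rfl fun i _ => ?_
        have h3 : (⟨(i : EuclideanSpace ℝ (Fin d)), i.2⟩ :
            (insert b F : Finset _)) = i := Subtype.coe_eta i i.2
        rw [hg]; simp only; rw [dif_pos i.2, h3]
      rw [← h2, h1]
    have hgrep : ∑ x ∈ insert b F, g x • x = a := by
      have h1 := (self_eq_sum hB a).symm
      have h2 : ∑ i : (insert b F : Finset _),
          β.coord i a • (i : EuclideanSpace ℝ (Fin d)) = ∑ x ∈ insert b F, g x • x := by
        rw [← Finset.sum_coe_sort (insert b F) (fun x => g x • x)]
        refine Finset.sum_congr rfl fun i _ => ?_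
        have h3 : (⟨(i : EuclideanSpace ℝ (Fin d)), i.2⟩ :
            (insert b F : Finset _)) = i := Subtype.coe_eta i i.2
        rw [hg]; simp only; rw [dif_pos i.2, h3]
      rw [← h2, h1]
    -- remove the b-term
    have hgb : g b = 0 := by
      have : β.coord ⟨b, hbG⟩ a = 0 := h0
      simp [hg, hbG, this]
    have hFsum : ∑ x ∈ F, g x = 1 := by
      rw [Finset.sum_insert hbF] at hgsum; rw [← hgsum, hgb]; ring
    have hFrep : ∑ x ∈ F, g x • x = a := by
      rw [Finset.sum_insert hbF] at hgrep; rw [← hgrep, hgb]; simp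
    -- contradiction with affine independence of insert a F
    set w : EuclideanSpace ℝ (Fin d) → ℝ := fun x => if x = a then -1 else g x with hw
    have hwsum : ∑ x : (insert a F : Finset _), w x = 0 := by
      rw [Finset.sum_coe_sort (insert a F) w, Finset.sum_insert haF]
      have : ∑ x ∈ F, w x = ∑ x ∈ F, g x := by
        refine Finset.sum_congr rfl fun x hx => ?_
        rw [hw]; simp only; rw [if_neg]; intro h; exact haF (h ▸ hx)
      rw [this, hFsum, hw]; simp
    have hwrep : ∑ x : (insert a F : Finset _),
        w x • (x : EuclideanSpace ℝ (Fin d)) = 0 := by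
      rw [Finset.sum_coe_sort (insert a F) (fun x => w x • x), Finset.sum_insert haF]
      have : ∑ x ∈ F, w x • x = ∑ x ∈ F, g x • x := by
        refine Finset.sum_congr rfl fun x hx => ?_
        rw [hw]; simp only; rw [if_neg]; intro h; exact haF (h ▸ hx)
      rw [this, hFrep, hw]; simp
    have := affineIndependent_iff.1 hA.2 Finset.univ (fun x => w x) hwsum hwrep
      ⟨a, mem_insert_self a F⟩ (mem_univ _)
    rw [hw] at this; simp at this
  -- ¬ 0 < κ a
  have hFne : F.Nonempty := card_pos.mp (by omega)
  have hnotpos : ¬ 0 < κ a := by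
    intro hpos
    set c := F.centroid ℝ id with hc
    have hccoord : ∀ i : (insert b F : Finset _),
        β.coord i c = if (i : EuclideanSpace ℝ (Fin d)) ∈ F then (F.card : ℝ)⁻¹ else 0 := by
      intro i
      have hw1 := F.sum_centroidWeights_eq_one_of_nonempty ℝ hFne
      rw [hc, Finset.centroid_def,
        map_affineCombination _ _ _ hw1 (β.coord i),
        affineCombination_eq_linear_combination _ _ _ hw1]
      have : ∀ u ∈ F, F.centroidWeights ℝ u • (β.coord i ∘ id) u =
          if (i : EuclideanSpace ℝ (Fin d)) = u then (F.card : ℝ)⁻¹ else 0 := by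
        intro u hu
        simp only [Function.comp, id_eq, Finset.centroidWeights_apply]
        rw [coord_mem hB i (mem_insert_of_mem hu)]
        by_cases h : (i : EuclideanSpace ℝ (Fin d)) = u <;> simp [h]
      rw [Finset.sum_congr rfl this, Finset.sum_ite_eq F _ (fun _ => (F.card : ℝ)⁻¹)]
    have hcb : β.coord ib c = 0 := by rw [hccoord]; simp only [ib]; rw [if_neg hbF]
    -- eventually all coordinates of lineMap c a t are nonneg
    have hev : ∀ᶠ t in nhdsWithin (0:ℝ) (Set.Ioi 0),
        ∀ i : (insert b F : Finset _), 0 ≤ β.coord i (AffineMap.lineMap c a t) := by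
      rw [Filter.eventually_all]
      intro i
      by_cases hiF : (i : EuclideanSpace ℝ (Fin d)) ∈ F
      · have hcont : Continuous fun t : ℝ => β.coord i (AffineMap.lineMap c a t) :=
          (continuous_barycentric_coord β i).comp
            AffineMap.lineMap_continuous
        have h0 : β.coord i (AffineMap.lineMap c a (0:ℝ)) = (F.card : ℝ)⁻¹ := by
          rw [AffineMap.apply_lineMap, AffineMap.lineMap_apply_module, hccoord, if_pos hiF]
          simp
        have hv : (0:ℝ) < (F.card : ℝ)⁻¹ := by
          have : (0:ℝ) < (F.card : ℝ) := by
            have : 0 < F.card := by omega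
            exact_mod_cast this
          exact inv_pos.mpr this
        have := (hcont.tendsto 0).eventually (eventually_gt_nhds (h0 ▸ hv))
        exact (this.filter_mono nhdsWithin_le_nhds).mono fun t ht => le_of_lt ht
      · have hib' : i = ib := by
          apply Subtype.ext
          rcases mem_insert.1 i.2 with h' | h'
          · exact h'
          · exact absurd h' hiF
        filter_upwards [self_mem_nhdsWithin] with t ht
        rw [hib', AffineMap.apply_lineMap]
        have hcb' : β.coord ib c = 0 := hcb
        rw [AffineMap.lineMap_apply_module, hcb', smul_zero, zero_add, smul_eq_mul]
        have : (0:ℝ) < t := ht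
        positivity
    have hev2 : ∀ᶠ t in nhdsWithin (0:ℝ) (Set.Ioi 0), t ∈ Set.Ioo (0:ℝ) 1 :=
      Ioo_mem_nhdsGT zero_lt_one
    obtain ⟨t, h1, h2⟩ := (hev.and hev2).exists
    set y := AffineMap.lineMap c a t with hy
    have hyB : y ∈ convexHull ℝ ((insert b F : Finset _) :
        Set (EuclideanSpace ℝ (Fin d))) := mem_hull_of_coords hB h1
    have hcF : c ∈ convexHull ℝ (F : Set (EuclideanSpace ℝ (Fin d))) :=
      F.centroid_mem_convexHull hFne
    have hyA : y ∈ convexHull ℝ ((insert a F : Finset _) :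
        Set (EuclideanSpace ℝ (Fin d))) := by
      have hc' : c ∈ convexHull ℝ ((insert a F : Finset _) :
          Set (EuclideanSpace ℝ (Fin d))) := by
        refine convexHull_mono ?_ hcF
        intro x hx
        simp only [coe_insert, Set.mem_insert_iff]
        right; exact hx
      have ha' : a ∈ convexHull ℝ ((insert a F : Finset _) :
          Set (EuclideanSpace ℝ (Fin d))) := by
        apply subset_convexHull
        simp
      rw [hy, AffineMap.lineMap_apply_module]
      exact (convex_convexHull ℝ _) hc' ha' (by linarith [h2.2]) (le_of_lt h2.1) (by ring)
    have hyF : y ∈ convexHull ℝ (F : Set (EuclideanSpace ℝ (Fin d))) := by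
      rw [← hcap]; exact ⟨hyA, hyB⟩
    have hκy0 : κ y = 0 := affineMap_eq_on_convexHull hκb hyF
    have hκy : κ y = t * κ a := by
      rw [hy, hκdef, AffineMap.apply_lineMap]
      rw [AffineMap.lineMap_apply_module]
      have : β.coord ib c = 0 := hcb
      rw [this, smul_zero, zero_add, smul_eq_mul]
    rw [hκy] at hκy0
    have : (0:ℝ) < t * κ a := mul_pos h2.1 hpos
    linarith
  exact lt_of_le_of_ne (not_lt.1 hnotpos) hne


lemma exists_apex {s t : Finset (EuclideanSpace ℝ (Fin d))}
    (hs : s.card = d + 1) (hcap : (t ∩ s).card = d) :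
    ∃ p, p ∉ t ∩ s ∧ p ∉ t ∧ s = insert p (t ∩ s) := by
  have hsub : t ∩ s ⊆ s := inter_subset_right
  have hcard : (s \ (t ∩ s)).card = 1 := by
    rw [card_sdiff_of_subset hsub, hs, hcap]; omega
  obtain ⟨p, hp⟩ := card_eq_one.1 hcard
  have hpmem : p ∈ s \ (t ∩ s) := hp ▸ mem_singleton_self p
  have hps : p ∈ s := (mem_sdiff.1 hpmem).1
  have hpn : p ∉ t ∩ s := (mem_sdiff.1 hpmem).2
  refine ⟨p, hpn, fun hpt => hpn (mem_inter.2 ⟨hpt, hps⟩), ?_⟩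
  ext x
  simp only [mem_insert]
  constructor
  · intro hx
    by_cases hx2 : x ∈ t ∩ s
    · exact Or.inr hx2
    · left
      have hmem : x ∈ s \ (t ∩ s) := mem_sdiff.2 ⟨hx, hx2⟩
      rw [hp] at hmem; exact mem_singleton.1 hmem
  · rintro (rfl | hx)
    · exact hps
    · exact hsub hx

end NoKd2Aux

/-- The dual graph of a pure `d`-dimensional simplicial complex in `ℝ^d` contains no
`K_{d+2}`: there are no `d+2` nondegenerate `d`-simplices with pairwise disjoint
interiors, every pair of which shares a `(d-1)`-facet. -/
theorem no_Kd2 (d : ℕ) (hd : 1 ≤ d) :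
    ¬ ∃ V : Fin (d + 2) → Finset (EuclideanSpace ℝ (Fin d)),
      (∀ i, IsSimplex d (V i)) ∧
      (∀ i j, i ≠ j →
        Disjoint (interior (convexHull ℝ (V i : Set (EuclideanSpace ℝ (Fin d)))))
          (interior (convexHull ℝ (V j : Set (EuclideanSpace ℝ (Fin d)))))) ∧
      (∀ i j, i ≠ j → SharesFacet d (V i) (V j)) := by
  classical
  rintro ⟨V, hsimp, -, hshare⟩
  open Finset NoKd2Aux in
  have h01 : (0 : Fin (d+2)) ≠ 1 := by simp [Fin.ext_iff]
  have h1ne : (1 : Fin (d+2)) ≠ 0 := Ne.symm h01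
  -- apex data relative to `V 0`
  have happex : ∀ j : Fin (d+2), j ≠ 0 →
      ∃ p r : EuclideanSpace ℝ (Fin d),
        p ∉ V 0 ∧ V j = insert p (V 0 ∩ V j) ∧ p ∉ V 0 ∩ V j ∧
        r ∉ V j ∧ V 0 = insert r (V 0 ∩ V j) ∧ r ∉ V 0 ∩ V j := by
    intro j hj
    obtain ⟨p, hp1, hp2, hp3⟩ := NoKd2Aux.exists_apex (hsimp j).1 (hshare 0 j (Ne.symm hj)).1
    have hcard' : (V j ∩ V 0).card = d := (hshare j 0 hj).1
    obtain ⟨r, hr1, hr2, hr3⟩ := NoKd2Aux.exists_apex (hsimp 0).1 hcard'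
    rw [Finset.inter_comm] at hr1 hr3
    exact ⟨p, r, hp2, hp3, hp1, hr2, hr3, hr1⟩
  choose p r hpV0 hVjEq hpF hrVj hV0Eq hrF using happex
  have hFcard : ∀ j (hj : j ≠ 0), (V 0 ∩ V j).card = d :=
    fun j hj => (hshare 0 j (Ne.symm hj)).1
  have hrV0 : ∀ j (hj : j ≠ 0), r j hj ∈ V 0 := by
    intro j hj; rw [hV0Eq j hj]; exact Finset.mem_insert_self _ _
  -- Step B : the facets `V 0 ∩ V j` are pairwise distinct
  have hFne : ∀ j k (hj : j ≠ 0) (hk : k ≠ 0), j ≠ k → V 0 ∩ V j ≠ V 0 ∩ V k := by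
    intro j k hj hk hjk hF
    set F := V 0 ∩ V j with hFdef
    have hVj' : V j = insert (p j hj) F := hVjEq j hj
    have hVk' : V k = insert (p k hk) F := by rw [hVjEq k hk, ← hF]
    have hpjF : p j hj ∉ F := hpF j hj
    have hpkF : p k hk ∉ F := by rw [hF]; exact hpF k hk
    have hrjF : r j hj ∉ F := hrF j hj
    have hpjr : p j hj ≠ r j hj := fun h => hpV0 j hj (h ▸ hrV0 j hj)
    have hpkr : p k hk ≠ r j hj := fun h => hpV0 k hk (h ▸ hrV0 j hj)
    have hpjpk : p j hj ≠ p k hk := by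
      intro h
      have hVV : V j = V k := by rw [hVj', hVk', h]
      have hcard := (hshare j k hjk).1
      rw [hVV, Finset.inter_self, (hsimp k).1] at hcard
      omega
    have hVjVk : V j ∩ V k = F := by
      rw [hVj', hVk']
      ext x
      simp only [Finset.mem_inter, Finset.mem_insert]
      constructor
      · rintro ⟨(rfl | h1), (h2 | h2)⟩
        · exact absurd h2 hpjpk
        · exact absurd h2 hpjF
        · exact h1
        · exact h1
      · intro hx; exact ⟨Or.inr hx, Or.inr hx⟩
    -- hull intersections
    have hV0' : V 0 = insert (r j hj) F := by
      have h := hV0Eq j hj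
      rw [← hFdef] at h
      exact h
    have hcapj : convexHull ℝ ((insert (p j hj) F : Finset _) :
          Set (EuclideanSpace ℝ (Fin d))) ∩
        convexHull ℝ ((insert (r j hj) F : Finset _) : Set (EuclideanSpace ℝ (Fin d))) =
        convexHull ℝ (F : Set (EuclideanSpace ℝ (Fin d))) := by
      have h := (hshare 0 j (Ne.symm hj)).2
      rw [← hFdef, hVj', hV0', Set.inter_comm] at h
      exact h
    have hcapk : convexHull ℝ ((insert (p k hk) F : Finset _) :
          Set (EuclideanSpace ℝ (Fin d))) ∩
        convexHull ℝ ((insert (r j hj) F : Finset _) : Set (EuclideanSpace ℝ (Fin d))) =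
        convexHull ℝ (F : Set (EuclideanSpace ℝ (Fin d))) := by
      have h := (hshare 0 k (Ne.symm hk)).2
      rw [← hF, hVk', hV0', Set.inter_comm] at h
      exact h
    have hcapjk : convexHull ℝ ((insert (p j hj) F : Finset _) :
          Set (EuclideanSpace ℝ (Fin d))) ∩
        convexHull ℝ ((insert (p k hk) F : Finset _) : Set (EuclideanSpace ℝ (Fin d))) =
        convexHull ℝ (F : Set (EuclideanSpace ℝ (Fin d))) := by
      have h := (hshare j k hjk).2
      rw [hVjVk, hVj', hVk'] at h
      exact h
    have hA : IsSimplex d (insert (p j hj) F) := by rw [← hVj']; exact hsimp j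
    have hB : IsSimplex d (insert (p k hk) F) := by rw [← hVk']; exact hsimp k
    have hV0S : IsSimplex d (insert (r j hj) F) := by rw [← hV0Eq j hj]; exact hsimp 0
    have hrmem : r j hj ∈ insert (r j hj) F := Finset.mem_insert_self _ _
    set ψr := (NoKd2Aux.basisOf hV0S).coord ⟨r j hj, hrmem⟩ with hψrdef
    have hψrF : ∀ x ∈ F, ψr x = 0 := by
      intro x hx
      rw [hψrdef, NoKd2Aux.coord_mem hV0S _ (Finset.mem_insert_of_mem hx)]
      exact if_neg fun h : r j hj = x => hrjF (h ▸ hx)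
    have hψrr : ψr (r j hj) = 1 := by
      rw [hψrdef, NoKd2Aux.coord_mem hV0S _ hrmem]
      exact if_pos rfl
    have hpkmem : p k hk ∈ insert (p k hk) F := Finset.mem_insert_self _ _
    set ψq := (NoKd2Aux.basisOf hB).coord ⟨p k hk, hpkmem⟩ with hψqdef
    have hψqF : ∀ x ∈ F, ψq x = 0 := by
      intro x hx
      rw [hψqdef, NoKd2Aux.coord_mem hB _ (Finset.mem_insert_of_mem hx)]
      exact if_neg fun h : p k hk = x => hpkF (h ▸ hx)
    have hψqq : ψq (p k hk) = 1 := by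
      rw [hψqdef, NoKd2Aux.coord_mem hB _ hpkmem]
      exact if_pos rfl
    have hFc : F.card = d := hFcard j hj
    have h1 : ψr (p j hj) < 0 :=
      NoKd2Aux.side_neg hd hpjF hrjF hpjr hFc hA hV0S hcapj ψr hψrF hψrr
    have h2 : ψr (p k hk) < 0 :=
      NoKd2Aux.side_neg hd hpkF hrjF hpkr hFc hB hV0S hcapk ψr hψrF hψrr
    have h3 : ψq (p j hj) < 0 :=
      NoKd2Aux.side_neg hd hpjF hpkF hpjpk hFc hA hB hcapjk ψq hψqF hψqq
    have h4 : ψr (p j hj) = ψq (p j hj) * ψr (p k hk) := by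
      rw [NoKd2Aux.eval_eq_sum hB ψr (p j hj),
        Finset.sum_eq_single (⟨p k hk, hpkmem⟩ : (insert (p k hk) F : Finset _))]
      · intro i _ hne
        have hi : (i : EuclideanSpace ℝ (Fin d)) ∈ insert (p k hk) F := i.2
        have hiF : (i : EuclideanSpace ℝ (Fin d)) ∈ F := by
          rcases Finset.mem_insert.1 hi with h' | h'
          · exact absurd (Subtype.ext h') hne
          · exact h'
        rw [hψrF _ hiF, mul_zero]
      · intro h; exact absurd (Finset.mem_univ _) h
    nlinarith [mul_pos_of_neg_of_neg h3 h2]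
  -- Step C : all simplices `V j`, `j ≠ 0`, have the same apex
  have hdiff : ∀ j (hj : j ≠ 0), V j \ V 0 = {p j hj} := by
    intro j hj
    ext x
    simp only [Finset.mem_sdiff, Finset.mem_singleton]
    constructor
    · rintro ⟨hx1, hx2⟩
      rw [hVjEq j hj] at hx1
      rcases Finset.mem_insert.1 hx1 with h | h
      · exact h
      · exact absurd (Finset.mem_inter.1 h).1 hx2
    · rintro rfl
      exact ⟨by rw [hVjEq j hj]; exact Finset.mem_insert_self _ _, hpV0 j hj⟩
  have hapex : ∀ j (hj : j ≠ 0), p j hj = p 1 h1ne := by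
    intro j hj
    by_cases hj1 : j = 1
    · subst hj1; rfl
    · have hpj1 : p j hj ∈ V 1 := by
        by_contra hpj1
        have hint : V j ∩ V 1 = (V 0 ∩ V j) ∩ (V 0 ∩ V 1) := by
          ext x
          simp only [Finset.mem_inter]
          constructor
          · rintro ⟨hx1, hx2⟩
            have hx0 : x ∈ V 0 ∩ V j := by
              rw [hVjEq j hj] at hx1
              rcases Finset.mem_insert.1 hx1 with h | h
              · exact absurd (h ▸ hx2) hpj1
              · exact h
            exact ⟨⟨(Finset.mem_inter.1 hx0).1, (Finset.mem_inter.1 hx0).2⟩,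
              (Finset.mem_inter.1 hx0).1, hx2⟩
          · rintro ⟨⟨_, hx1⟩, _, hx2⟩
            exact ⟨hx1, hx2⟩
        have hcard1 := (hshare j 1 hj1).1
        rw [hint] at hcard1
        have hsub : (V 0 ∩ V j) ∩ (V 0 ∩ V 1) ⊆ V 0 ∩ V j := Finset.inter_subset_left
        have heq1 : (V 0 ∩ V j) ∩ (V 0 ∩ V 1) = V 0 ∩ V j :=
          Finset.eq_of_subset_of_card_le hsub (by rw [hcard1, hFcard j hj])
        have hsub2 : V 0 ∩ V j ⊆ V 0 ∩ V 1 := by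
          rw [← heq1]; exact Finset.inter_subset_right
        have heq2 : V 0 ∩ V j = V 0 ∩ V 1 :=
          Finset.eq_of_subset_of_card_le hsub2
            (by rw [hFcard j hj, hFcard 1 h1ne])
        exact hFne j 1 hj h1ne hj1 heq2
      have hmem : p j hj ∈ V 1 \ V 0 := Finset.mem_sdiff.2 ⟨hpj1, hpV0 j hj⟩
      rw [hdiff 1 h1ne] at hmem
      exact Finset.mem_singleton.1 hmem
  -- Step D : all simplices are of the form `U.erase u`
  set q : EuclideanSpace ℝ (Fin d) := p 1 h1ne with hq
  have hqV0 : q ∉ V 0 := hpV0 1 h1ne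
  set U := insert q (V 0) with hU
  have hUcard : U.card = d + 2 := by
    rw [hU, Finset.card_insert_of_notMem hqV0, (hsimp 0).1]
  have hmiss : ∀ i, ∃ u, u ∈ U ∧ V i = U.erase u := by
    intro i
    by_cases hi : i = 0
    · subst hi
      exact ⟨q, Finset.mem_insert_self _ _, by rw [hU, Finset.erase_insert hqV0]⟩
    · refine ⟨r i hi, by rw [hU]; exact Finset.mem_insert_of_mem (hrV0 i hi), ?_⟩
      have h5 : V 0 ∩ V i = (V 0).erase (r i hi) := by
        conv_rhs => rw [hV0Eq i hi]
        rw [Finset.erase_insert (hrF i hi)]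
      have hqr : q ≠ r i hi := fun h => hqV0 (h ▸ hrV0 i hi)
      rw [hVjEq i hi, hapex i hi, h5, hU, Finset.erase_insert_of_ne hqr]
  choose u huU hVu using hmiss
  have hVne : ∀ i j, i ≠ j → V i ≠ V j := by
    intro i j hij heq
    have hcard := (hshare i j hij).1
    rw [heq, Finset.inter_self, (hsimp j).1] at hcard
    omega
  have huinj : Function.Injective u := by
    intro i j h
    by_contra hij
    exact hVne i j hij (by rw [hVu i, hVu j, h])
  have husurj : ∀ x ∈ U, ∃ i, u i = x := by
    have himg : Finset.univ.image u = U := by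
      apply Finset.eq_of_subset_of_card_le
      · intro x hx
        obtain ⟨i, _, rfl⟩ := Finset.mem_image.1 hx
        exact huU i
      · rw [hUcard, Finset.card_image_of_injective _ huinj, Finset.card_univ,
          Fintype.card_fin]
    intro x hx
    rw [← himg] at hx
    obtain ⟨i, _, hi⟩ := Finset.mem_image.1 hx
    exact ⟨i, hi⟩
  -- Step E : Radon-type contradiction
  have hnotaff : ¬ AffineIndependent ℝ
      (fun x : (U : Finset _) => (x : EuclideanSpace ℝ (Fin d))) := by
    intro h
    have hc := h.card_le_finrank_succ
    have h1 : Fintype.card U = d + 2 := by rw [Fintype.card_coe, hUcard]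
    have h2 := Submodule.finrank_le (vectorSpan ℝ (Set.range
      (fun x : (U : Finset _) => (x : EuclideanSpace ℝ (Fin d)))))
    rw [finrank_euclideanSpace_fin] at h2
    omega
  rw [affineIndependent_iff] at hnotaff
  push_neg at hnotaff
  obtain ⟨s, w, hw0, hwz, e, hes, hwe⟩ := hnotaff
  set P := s.filter (fun i => 0 < w i) with hP
  set N := s.filter (fun i => w i < 0) with hN
  have hPdisjN : Disjoint P N := by
    rw [Finset.disjoint_left]
    intro i hiP hiN
    have h1 := (Finset.mem_filter.1 hiP).2
    have h2 := (Finset.mem_filter.1 hiN).2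
    linarith
  have hPN : P ∪ N ⊆ s :=
    Finset.union_subset (Finset.filter_subset _ _) (Finset.filter_subset _ _)
  have hzero : ∀ i ∈ s, i ∉ P ∪ N → w i = 0 := by
    intro i hi hni
    rw [Finset.mem_union] at hni
    push_neg at hni
    have h1 : ¬ 0 < w i := fun h => hni.1 (Finset.mem_filter.2 ⟨hi, h⟩)
    have h2 : ¬ w i < 0 := fun h => hni.2 (Finset.mem_filter.2 ⟨hi, h⟩)
    linarith [not_lt.1 h1, not_lt.1 h2]
  have hsum_w : ∑ i ∈ P, w i + ∑ i ∈ N, w i = 0 := by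
    rw [← Finset.sum_union hPdisjN, ← hw0]
    exact Finset.sum_subset hPN (fun i hi hni => hzero i hi hni)
  have hsum_z : ∑ i ∈ P, w i • (i : EuclideanSpace ℝ (Fin d)) +
      ∑ i ∈ N, w i • (i : EuclideanSpace ℝ (Fin d)) = 0 := by
    rw [← Finset.sum_union hPdisjN, ← hwz]
    exact Finset.sum_subset hPN (fun i hi hni => by rw [hzero i hi hni, zero_smul])
  have hPneN : P.Nonempty ∧ N.Nonempty := by
    have he2 : e ∈ P ∪ N := by
      by_contra h
      exact hwe (hzero e hes h)
    have hP_of_N : N.Nonempty → P.Nonempty := by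
      intro hNne
      rcases Finset.eq_empty_or_nonempty P with hPe | hPne
      · exfalso
        have hneg : 0 < ∑ i ∈ N, -w i :=
          Finset.sum_pos (fun i hi => by linarith [(Finset.mem_filter.1 hi).2]) hNne
        rw [Finset.sum_neg_distrib] at hneg
        rw [hPe, Finset.sum_empty] at hsum_w
        linarith
      · exact hPne
    have hN_of_P : P.Nonempty → N.Nonempty := by
      intro hPne
      rcases Finset.eq_empty_or_nonempty N with hNe | hNne
      · exfalso
        have hpos : 0 < ∑ i ∈ P, w i :=
          Finset.sum_pos (fun i hi => (Finset.mem_filter.1 hi).2) hPne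
        rw [hNe, Finset.sum_empty] at hsum_w
        linarith
      · exact hNne
    rcases Finset.mem_union.1 he2 with h | h
    · exact ⟨⟨e, h⟩, hN_of_P ⟨e, h⟩⟩
    · exact ⟨hP_of_N ⟨e, h⟩, ⟨e, h⟩⟩
  obtain ⟨⟨ia, hia⟩, ⟨ibb, hibb⟩⟩ := hPneN
  have hwia : 0 < w ia := (Finset.mem_filter.1 hia).2
  have hwib : w ibb < 0 := (Finset.mem_filter.1 hibb).2
  set aa : EuclideanSpace ℝ (Fin d) := ↑ia with haa
  set bb : EuclideanSpace ℝ (Fin d) := ↑ibb with hbb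
  have haabb : aa ≠ bb := by
    intro h
    have : ia = ibb := Subtype.coe_injective h
    rw [this] at hwia
    linarith
  obtain ⟨I, hI⟩ := husurj aa ia.2
  obtain ⟨J, hJ⟩ := husurj bb ibb.2
  have hIJ : I ≠ J := fun h => haabb (by rw [← hI, ← hJ, h])
  set cP := ∑ i ∈ P, w i with hcP
  have hcPpos : 0 < cP :=
    Finset.sum_pos (fun i hi => (Finset.mem_filter.1 hi).2) ⟨ia, hia⟩
  set w1 : {x // x ∈ U} → ℝ := fun i => w i / cP with hw1
  set w2 : {x // x ∈ U} → ℝ := fun i => -w i / cP with hw2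
  have hsum1 : ∑ i ∈ P, w1 i = 1 := by
    rw [hw1]
    simp only
    rw [← Finset.sum_div, ← hcP]
    exact div_self (ne_of_gt hcPpos)
  have hsumN : ∑ i ∈ N, w i = -cP := by linarith
  have hsum2 : ∑ i ∈ N, w2 i = 1 := by
    rw [hw2]
    simp only
    rw [← Finset.sum_div, Finset.sum_neg_distrib, hsumN, neg_neg]
    exact div_self (ne_of_gt hcPpos)
  set x := ∑ i ∈ P, w1 i • (i : EuclideanSpace ℝ (Fin d)) with hx
  have hxN : x = ∑ i ∈ N, w2 i • (i : EuclideanSpace ℝ (Fin d)) := by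
    rw [hx, hw1, hw2]
    simp only
    have hL : ∑ i ∈ P, (w i / cP) • (i : EuclideanSpace ℝ (Fin d)) =
        cP⁻¹ • ∑ i ∈ P, w i • (i : EuclideanSpace ℝ (Fin d)) := by
      rw [Finset.smul_sum]
      exact Finset.sum_congr rfl fun i _ => by rw [div_eq_inv_mul, mul_smul]
    have hR : ∑ i ∈ N, (-w i / cP) • (i : EuclideanSpace ℝ (Fin d)) =
        cP⁻¹ • ∑ i ∈ N, (-w i) • (i : EuclideanSpace ℝ (Fin d)) := by
      rw [Finset.smul_sum]
      exact Finset.sum_congr rfl fun i _ => by rw [div_eq_inv_mul, mul_smul]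
    rw [hL, hR]
    congr 1
    have : ∑ i ∈ N, (-w i) • (i : EuclideanSpace ℝ (Fin d)) =
        -∑ i ∈ N, w i • (i : EuclideanSpace ℝ (Fin d)) := by
      rw [← Finset.sum_neg_distrib]
      exact Finset.sum_congr rfl fun i _ => by rw [neg_smul]
    rw [this]
    linear_combination (norm := module) hsum_z
  have hw1nn : ∀ i ∈ P, 0 ≤ w1 i := by
    intro i hi
    rw [hw1]
    have := (Finset.mem_filter.1 hi).2
    positivity
  have hw2nn : ∀ i ∈ N, 0 ≤ w2 i := by
    intro i hi
    rw [hw2]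
    have := (Finset.mem_filter.1 hi).2
    simp only
    apply div_nonneg _ (le_of_lt hcPpos)
    linarith
  have hPJ : ∀ i ∈ P, (i : EuclideanSpace ℝ (Fin d)) ∈ V J := by
    intro i hi
    rw [hVu J, hJ]
    refine Finset.mem_erase.2 ⟨?_, i.2⟩
    intro h
    have : i = ibb := Subtype.coe_injective h
    rw [this] at hi
    exact (Finset.disjoint_left.1 hPdisjN hi) hibb
  have hNI : ∀ i ∈ N, (i : EuclideanSpace ℝ (Fin d)) ∈ V I := by
    intro i hi
    rw [hVu I, hI]
    refine Finset.mem_erase.2 ⟨?_, i.2⟩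
    intro h
    have : i = ia := Subtype.coe_injective h
    rw [this] at hi
    exact (Finset.disjoint_left.1 hPdisjN hia) hi
  have hxJmem : x ∈ convexHull ℝ ((V J : Finset _) : Set (EuclideanSpace ℝ (Fin d))) := by
    have hcm : x = P.centerMass w1 (fun i => (i : EuclideanSpace ℝ (Fin d))) :=
      (P.centerMass_eq_of_sum_1 _ hsum1).symm
    rw [hcm]
    exact Finset.centerMass_mem_convexHull P hw1nn (by rw [hsum1]; norm_num)
      (fun i hi => hPJ i hi)
  have hxImem : x ∈ convexHull ℝ ((V I : Finset _) : Set (EuclideanSpace ℝ (Fin d))) := by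
    have hcm : x = N.centerMass w2 (fun i => (i : EuclideanSpace ℝ (Fin d))) := by
      rw [hxN]
      exact (N.centerMass_eq_of_sum_1 _ hsum2).symm
    rw [hcm]
    exact Finset.centerMass_mem_convexHull N hw2nn (by rw [hsum2]; norm_num)
      (fun i hi => hNI i hi)
  have hxface : x ∈ convexHull ℝ ((V I ∩ V J : Finset _) : Set (EuclideanSpace ℝ (Fin d))) := by
    rw [← (hshare I J hIJ).2]
    exact ⟨hxImem, hxJmem⟩
  have haJ : aa ∈ V J := by
    rw [hVu J, hJ]
    exact Finset.mem_erase.2 ⟨haabb, ia.2⟩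
  set κ := (NoKd2Aux.basisOf (hsimp J)).coord ⟨aa, haJ⟩ with hκ
  have hκ0 : κ x = 0 := by
    refine NoKd2Aux.affineMap_eq_on_convexHull ?_ hxface
    intro y hy
    have hy' := Finset.mem_coe.1 hy
    have hyJ : y ∈ V J := (Finset.mem_inter.1 hy').2
    have hyI : y ∈ V I := (Finset.mem_inter.1 hy').1
    have hyne : y ≠ aa := by
      rw [hVu I, hI] at hyI
      exact (Finset.mem_erase.1 hyI).1
    rw [hκ, NoKd2Aux.coord_mem (hsimp J) _ hyJ]
    exact if_neg (fun h => hyne h.symm)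
  have hκpos : κ x = w ia / cP := by
    have hxa : x = Finset.affineCombination ℝ P
        (fun i => (i : EuclideanSpace ℝ (Fin d))) w1 := by
      rw [affineCombination_eq_linear_combination _ _ _ hsum1, hx]
    rw [hxa, hκ]
    rw [map_affineCombination _ _ _ hsum1]
    rw [affineCombination_eq_linear_combination _ _ _ hsum1]
    have hterm : ∀ i ∈ P, w1 i • (((NoKd2Aux.basisOf (hsimp J)).coord ⟨aa, haJ⟩ : _ →ᵃ[ℝ] ℝ) ∘
        (fun i : (U : Finset _) => (i : EuclideanSpace ℝ (Fin d)))) i =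
        if i = ia then w1 i else 0 := by
      intro i hi
      simp only [Function.comp]
      rw [NoKd2Aux.coord_mem (hsimp J) _ (hPJ i hi)]
      by_cases h : aa = (i : EuclideanSpace ℝ (Fin d))
      · rw [if_pos h, if_pos (Subtype.coe_injective h.symm : i = ia)]
        rw [smul_eq_mul, mul_one]
      · rw [if_neg h, if_neg (fun hh : i = ia => h (by rw [hh]))]
        rw [smul_zero]
    rw [Finset.sum_congr rfl hterm, Finset.sum_ite_eq' P ia w1, if_pos hia]
  have hfin : (0:ℝ) < w ia / cP := div_pos hwia hcPpos
  rw [hκpos] at hκ0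
  linarith
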